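/- The complex number λ_0 = i·√((−1 + √13)/6) is not contained in any cyclotomic field; that is, there is no root of unity ζ such that λ_0 ∈ Q(ζ). -/

import Mathlib

/-- `λ₀ = i·√((−1 + √13)/6)`. -/
noncomputable def lambda0 : ℂ := Complex.I * Real.sqrt ((-1 + Real.sqrt 13) / 6)

lemma sqrt13_irrat : ∀ b : ℚ, b ^ 2 ≠ 13 := by
  intro b hb
  have h13 : Irrational (Real.sqrt 13) := Nat.Prime.irrational_sqrt (by norm_num)
  have hbpos : Real.sqrt ((13:ℕ):ℝ) = |(b : ℝ)| := by
    have h2 : ((b : ℝ)) ^ 2 = 13 := by exact_mod_cast congrArg (fun x : ℚ => (x : ℝ)) hb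
    rw [show (((13:ℕ):ℝ)) = ((b:ℝ))^2 by rw [h2]; norm_num, Real.sqrt_sq_eq_abs]
  rw [← Rat.cast_abs] at hbpos
  refine h13 ⟨|b|, ?_⟩
  rw [← hbpos]; norm_num

lemma lambda0_sq : lambda0 ^ 2 = (1 - (Real.sqrt 13 : ℂ)) / 6 := by
  have h13 : (1 : ℝ) ≤ Real.sqrt 13 := by
    rw [show (13 : ℝ) = 13 from rfl]
    nlinarith [Real.sq_sqrt (by norm_num : (13:ℝ) ≥ 0), Real.sqrt_nonneg (13:ℝ)]
  have hnn : (0 : ℝ) ≤ (-1 + Real.sqrt 13) / 6 := by linarith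
  have hs : (Real.sqrt ((-1 + Real.sqrt 13) / 6) : ℝ) ^ 2 = (-1 + Real.sqrt 13) / 6 :=
    Real.sq_sqrt hnn
  unfold lambda0
  rw [mul_pow, Complex.I_sq]
  have : ((Real.sqrt ((-1 + Real.sqrt 13) / 6) : ℝ) : ℂ) ^ 2
      = (((-1 + Real.sqrt 13) / 6 : ℝ) : ℂ) := by exact_mod_cast congrArg Complex.ofReal hs
  rw [this]
  push_cast
  ring

set_option synthInstance.maxHeartbeats 1000000 in
set_option maxHeartbeats 1000000 in
/-- `λ₀` is not contained in any cyclotomic field `ℚ(ζ)` for a root of unity `ζ`. -/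
theorem lambda0_not_cyclotomic :
    ¬ ∃ (n : ℕ) (ζ : ℂ), 0 < n ∧ IsPrimitiveRoot ζ n ∧
      lambda0 ∈ IntermediateField.adjoin ℚ ({ζ} : Set ℂ) := by
  rintro ⟨n, ζ, hn, hζ, hmem⟩
  set K := IntermediateField.adjoin ℚ ({ζ} : Set ℂ) with hK
  -- ζ is integral over ℚ
  have hζ_int : IsIntegral ℚ ζ :=
    ⟨Polynomial.X ^ n - 1, Polynomial.monic_X_pow_sub_C 1 hn.ne',
      by simpa [sub_eq_zero] using hζ.pow_eq_one⟩
  -- K is a cyclotomic extension of ℚ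
  let np : ℕ+ := ⟨n, hn⟩
  have hζp : IsPrimitiveRoot ζ (np : ℕ) := hζ
  haveI hcyc' : IsCyclotomicExtension {(np : ℕ)} ℚ (Algebra.adjoin ℚ ({ζ} : Set ℂ)) :=
    hζp.adjoin_isCyclotomicExtension ℚ
  have hsub : K.toSubalgebra = Algebra.adjoin ℚ ({ζ} : Set ℂ) :=
    IntermediateField.adjoin_simple_toSubalgebra_of_isAlgebraic hζ_int.isAlgebraic
  let e : (Algebra.adjoin ℚ ({ζ} : Set ℂ)) ≃ₐ[ℚ] K :=
    Subalgebra.equivOfEq _ _ hsub.symm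
  haveI hcyc : IsCyclotomicExtension {(np : ℕ)} ℚ K := IsCyclotomicExtension.equiv _ ℚ _ e
  haveI : IsGalois ℚ K := IsCyclotomicExtension.isGalois {(np : ℕ)} ℚ K
  -- the Galois group is commutative
  have hcomm : ∀ σ τ : K ≃ₐ[ℚ] K, σ * τ = τ * σ := by
    intro σ τ
    apply (IsCyclotomicExtension.zeta_spec (np : ℕ) ℚ K).autToPow_injective ℚ
    rw [map_mul, map_mul, mul_comm]
  -- elements of K
  have h13mem : ((Real.sqrt 13 : ℝ) : ℂ) ∈ K := by
    have : ((Real.sqrt 13 : ℝ) : ℂ) = 1 - 6 * lambda0 ^ 2 := by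
      rw [lambda0_sq]; ring
    rw [this]
    exact sub_mem (one_mem K) (mul_mem (by exact_mod_cast K.natCast_mem 6) (pow_mem hmem 2))
  set l : K := ⟨lambda0, hmem⟩ with hl
  set x : K := ⟨((Real.sqrt 13 : ℝ) : ℂ), h13mem⟩ with hx
  have hx_sq : x ^ 2 = (13 : K) := by
    have h : ((Real.sqrt 13 : ℝ) : ℂ) ^ 2 = 13 := by
      rw [← Complex.ofReal_pow, Real.sq_sqrt (by norm_num : (0:ℝ) ≤ 13)]
      norm_num
    apply Subtype.ext
    push_cast
    exact h
  have hl_sq : l ^ 2 = (1 - x) / 6 := by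
    apply Subtype.ext
    push_cast
    exact lambda0_sq
  -- minimal polynomial of x is X^2 - 13
  have hirr : Irreducible (Polynomial.X ^ 2 - Polynomial.C (13 : ℚ)) :=
    X_pow_sub_C_irreducible_of_prime Nat.prime_two sqrt13_irrat
  have haev : Polynomial.aeval x (Polynomial.X ^ 2 - Polynomial.C (13 : ℚ)) = 0 := by
    simp [hx_sq]
  have hminp : minpoly ℚ x = Polynomial.X ^ 2 - Polynomial.C (13 : ℚ) :=
    (minpoly.eq_of_irreducible_of_monic hirr haev
      (Polynomial.monic_X_pow_sub_C _ two_ne_zero)).symm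
  -- σ with σ x = -x
  have hxalg : IsAlgebraic ℚ x :=
    ⟨Polynomial.X ^ 2 - Polynomial.C (13 : ℚ),
      (Polynomial.monic_X_pow_sub_C _ two_ne_zero).ne_zero, haev⟩
  have haev' : Polynomial.aeval (-x) (minpoly ℚ x) = 0 := by
    rw [hminp]; simp [hx_sq]
  obtain ⟨σ, hσ⟩ := minpoly.exists_algEquiv_of_root' hxalg haev'
  -- complex conjugation restricted to K
  let φ : ℂ ≃ₐ[ℚ] ℂ := Complex.conjAe.restrictScalars ℚ
  let c : K ≃ₐ[ℚ] K := φ.restrictNormal K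
  have hc : ∀ y : K, (↑(c y) : ℂ) = (starRingEnd ℂ) (↑y : ℂ) := by
    intro y
    exact AlgEquiv.restrictNormal_commutes φ K y
  -- c l = -l
  have hcl : c l = -l := by
    apply Subtype.ext
    rw [hc]
    show (starRingEnd ℂ) lambda0 = -lambda0
    unfold lambda0
    rw [map_mul, Complex.conj_I, Complex.conj_ofReal]
    ring
  -- the contradiction
  set m : K := σ l with hm
  have hcm : c m = -m := by
    have := congrArg (fun τ : K ≃ₐ[ℚ] K => τ l) (hcomm c σ)
    simp only [AlgEquiv.mul_apply] at this
    rw [hm, this, hcl, map_neg]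
  have hm_sq : m ^ 2 = (1 + x) / 6 := by
    rw [hm, ← map_pow, hl_sq, map_div₀, map_sub, map_one, hσ, map_ofNat]
    ring
  -- pass to ℂ
  have hw_conj : (starRingEnd ℂ) (↑m : ℂ) = -(↑m : ℂ) := by
    rw [← hc, hcm]; push_cast; ring
  have hw_re : (↑m : ℂ).re = 0 := by
    have h := congrArg Complex.re hw_conj
    simp only [Complex.conj_re, Complex.neg_re] at h
    linarith
  have hw_sq : ((↑m : ℂ)) ^ 2 = (1 + ((Real.sqrt 13 : ℝ) : ℂ)) / 6 := by
    have h := congrArg (Subtype.val) hm_sq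
    push_cast at h
    exact h
  have h1 : ((↑m : ℂ) ^ 2).re = -((↑m : ℂ).im) ^ 2 := by
    rw [sq, Complex.mul_re, hw_re]; ring
  have h2 : ((1 + ((Real.sqrt 13 : ℝ) : ℂ)) / 6).re = (1 + Real.sqrt 13) / 6 := by
    simp [Complex.div_re, Complex.add_re, Complex.one_re, Complex.ofReal_re]
  have h3 : (0:ℝ) < (1 + Real.sqrt 13) / 6 := by
    have := Real.sqrt_nonneg (13:ℝ); linarith
  rw [hw_sq, h2] at h1
  nlinarith [sq_nonneg ((↑m : ℂ).im)]
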